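/- Let R and S be integral domains and let j : R → S be an injective ring homomorphism. Assume that R is a local ring of Krull dimension 1 with maximal ideal I, and let g ∈ I be a nonzero element such that j(g) is not a unit of S. Then there exists a prime ideal J of S such that j⁻¹(J) = I; in particular I lies in the image of the induced map Spec S → Spec R. -/
import Mathlib


/-- Let `R` and `S` be integral domains and `j : R → S` an injective ring
homomorphism. Assume `R` is a local ring of Krull dimension 1 with maximal ideal `I`, and let
`g ∈ I` be a nonzero element such that `j g` is not a unit of `S`. Then there exists a prime
ideal `J` of `S` with `j⁻¹(J) = I`; in particular `I` lies in the image of `Spec S → Spec R`. -/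
theorem azumaya_stmt0 {R S : Type*} [CommRing R] [IsDomain R] [CommRing S] [IsDomain S]
    [IsLocalRing R] (hdim : ringKrullDim R = 1)
    (j : R →+* S) (hj : Function.Injective j)
    (g : R) (hgI : g ∈ IsLocalRing.maximalIdeal R) (hg0 : g ≠ 0)
    (hgu : ¬ IsUnit (j g)) :
    ∃ J : Ideal S, J.IsPrime ∧ J.comap j = IsLocalRing.maximalIdeal R := by
  -- j g lies in some maximal ideal of S
  obtain ⟨J, hJmax, hgJ⟩ := (Ideal.span {j g}).exists_le_maximal
    (by rwa [Ne, Ideal.span_singleton_eq_top])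
  have hgJ' : j g ∈ J := hgJ (Ideal.subset_span rfl)
  refine ⟨J, hJmax.isPrime, ?_⟩
  set P : Ideal R := J.comap j with hP
  haveI hPprime : P.IsPrime := @Ideal.IsPrime.comap _ _ _ _ _ _ j J _ hJmax.isPrime
  have hgP : g ∈ P := hgJ'
  have hPne : P ≠ ⊥ := fun h => hg0 (by simpa [h] using hgP)
  have hPle : P ≤ IsLocalRing.maximalIdeal R := IsLocalRing.le_maximalIdeal hPprime.ne_top
  -- suppose P ≠ maximal ideal; build a chain of length 2
  by_contra hne
  have hPlt : P < IsLocalRing.maximalIdeal R := lt_of_le_of_ne hPle hne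
  have hbot : (⊥ : Ideal R) < P := bot_lt_iff_ne_bot.mpr hPne
  haveI : (IsLocalRing.maximalIdeal R).IsPrime :=
    (IsLocalRing.maximalIdeal.isMaximal R).isPrime
  let p0 : PrimeSpectrum R := ⟨⊥, Ideal.bot_prime⟩
  let p1 : PrimeSpectrum R := ⟨P, hPprime⟩
  let p2 : PrimeSpectrum R := ⟨IsLocalRing.maximalIdeal R, inferInstance⟩
  let c : LTSeries (PrimeSpectrum R) :=
    (RelSeries.singleton _ p2).cons p1 (by exact hPlt) |>.cons p0 (by exact hbot)
  have hlen : (c.length : WithBot ℕ∞) ≤ ringKrullDim R := Order.LTSeries.length_le_krullDim c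
  have : c.length = 2 := rfl
  rw [this, hdim] at hlen
  exact absurd hlen (by norm_num)
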